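/- Let n ≥ 2 and let σ = σ_1σ_2⋯σ_n ∈ D_n, and let σ̂ := (-σ_1)σ_2⋯σ_n ∈ B_n \ D_n. Then σ and σ̂ have the same number of D-descents, d(σ̂) = d(σ), and moreover: σ is of type '1' if and only if σ̂ is of type '0,≥2'; σ is of type '0,1' if and only if σ̂ is of type '0,1'; σ is of type '≥2' if and only if σ̂ is of type '≥2'; and σ is of type '0,≥2' if and only if σ̂ is of type '1'. -/

import Mathlib

/-- A signed permutation of `{1,…,n}`, encoded as an (unsigned) permutation of
`Fin n` together with a choice of sign for each position.  The associated
word is `π_1 π_2 ⋯ π_n` where `π_j = ± σ(j)`. -/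
abbrev SignedPerm (n : ℕ) := Equiv.Perm (Fin n) × (Fin n → Bool)

namespace SignedPerm

/-- The letter `π_j` of the word of `p`, for `1 ≤ j ≤ n` (and `0` otherwise). -/
def word {n : ℕ} (p : SignedPerm n) (j : ℕ) : ℤ :=
  if h : 1 ≤ j ∧ j ≤ n then
    (if p.2 ⟨j - 1, by omega⟩ then -1 else 1) * ((p.1 ⟨j - 1, by omega⟩ : ℕ) + 1)
  else 0

/-- The letter `π_j`, with the type `D` convention `π_0 = -π_2`. -/
def entry {n : ℕ} (p : SignedPerm n) (j : ℕ) : ℤ :=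
  if j = 0 then -(p.word 2) else p.word j

/-- The set of `D`-descents of `p`: those `i ∈ {0,…,n-1}` with `π_i > π_{i+1}`. -/
def ddes {n : ℕ} (p : SignedPerm n) : Finset ℕ :=
  (Finset.range n).filter fun i => p.entry (i + 1) < p.entry i

/-- The number of `D`-descents of `p`. -/
def d {n : ℕ} (p : SignedPerm n) : ℕ := p.ddes.card

/-- Membership in the type `D` Coxeter group `D_n ⊆ B_n`:
the number of negative letters is even. -/
def inD {n : ℕ} (p : SignedPerm n) : Prop :=
  Even (Finset.univ.filter (fun i => p.2 i = true)).card

/-- Type '1': descent at position `1` but not at `0`. -/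
def type1 {n : ℕ} (p : SignedPerm n) : Prop := 1 ∈ p.ddes ∧ 0 ∉ p.ddes

/-- Type '0,1': descents at both positions `0` and `1`. -/
def type01 {n : ℕ} (p : SignedPerm n) : Prop := 0 ∈ p.ddes ∧ 1 ∈ p.ddes

/-- Type '≥2': no descent at positions `0` and `1`. -/
def typeGe2 {n : ℕ} (p : SignedPerm n) : Prop := 0 ∉ p.ddes ∧ 1 ∉ p.ddes

/-- Type '0,≥2': descent at position `0` but not at `1`. -/
def type0Ge2 {n : ℕ} (p : SignedPerm n) : Prop := 0 ∈ p.ddes ∧ 1 ∉ p.ddes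

instance {n : ℕ} (p : SignedPerm n) : Decidable p.inD := by
  unfold SignedPerm.inD; infer_instance
instance {n : ℕ} (p : SignedPerm n) : Decidable p.type1 := by
  unfold SignedPerm.type1; infer_instance
instance {n : ℕ} (p : SignedPerm n) : Decidable p.type01 := by
  unfold SignedPerm.type01; infer_instance
instance {n : ℕ} (p : SignedPerm n) : Decidable p.typeGe2 := by
  unfold SignedPerm.typeGe2; infer_instance
instance {n : ℕ} (p : SignedPerm n) : Decidable p.type0Ge2 := by
  unfold SignedPerm.type0Ge2; infer_instance

end SignedPerm

/-- The type `D` Eulerian number `D_{n,k}`: the number of elements of `D_n`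
with exactly `k` `D`-descents (zero for `k < 0`). -/
def eulerD (n : ℕ) (k : ℤ) : ℕ :=
  (Finset.univ.filter fun p : SignedPerm n => p.inD ∧ (p.d : ℤ) = k).card

/-- The sub-Eulerian number `D_{n,k}^1`. -/
def subEuler1 (n : ℕ) (k : ℤ) : ℕ :=
  (Finset.univ.filter fun p : SignedPerm n => p.inD ∧ p.type1 ∧ (p.d : ℤ) = k).card

/-- The sub-Eulerian number `D_{n,k}^{0,1}`. -/
def subEuler01 (n : ℕ) (k : ℤ) : ℕ :=
  (Finset.univ.filter fun p : SignedPerm n => p.inD ∧ p.type01 ∧ (p.d : ℤ) = k).card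

/-- The sub-Eulerian number `D_{n,k}^{≥2}`. -/
def subEulerGe2 (n : ℕ) (k : ℤ) : ℕ :=
  (Finset.univ.filter fun p : SignedPerm n => p.inD ∧ p.typeGe2 ∧ (p.d : ℤ) = k).card

/-- The sub-Eulerian number `D_{n,k}^{0,≥2}`. -/
def subEuler0Ge2 (n : ℕ) (k : ℤ) : ℕ :=
  (Finset.univ.filter fun p : SignedPerm n => p.inD ∧ p.type0Ge2 ∧ (p.d : ℤ) = k).card

/-- The type `D` Eulerian polynomial `D_n(t) = Σ_{π ∈ D_n} t^{d(π)}`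
(with `D_0(t) = D_1(t) = 1`). -/
noncomputable def polyD (n : ℕ) : Polynomial ℚ :=
  ∑ p ∈ Finset.univ.filter (fun p : SignedPerm n => p.inD), Polynomial.X ^ p.d

/-- The sub-Eulerian polynomial `D_n^1(t)`. -/
noncomputable def polyD1 (n : ℕ) : Polynomial ℚ :=
  ∑ p ∈ Finset.univ.filter (fun p : SignedPerm n => p.inD ∧ p.type1), Polynomial.X ^ p.d

/-- The sub-Eulerian polynomial `D_n^{0,1}(t)`. -/
noncomputable def polyD01 (n : ℕ) : Polynomial ℚ :=
  ∑ p ∈ Finset.univ.filter (fun p : SignedPerm n => p.inD ∧ p.type01), Polynomial.X ^ p.d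

/-- The sub-Eulerian polynomial `D_n^{≥2}(t)`. -/
noncomputable def polyDGe2 (n : ℕ) : Polynomial ℚ :=
  ∑ p ∈ Finset.univ.filter (fun p : SignedPerm n => p.inD ∧ p.typeGe2), Polynomial.X ^ p.d

/-- The sub-Eulerian polynomial `D_n^{0,≥2}(t)`. -/
noncomputable def polyD0Ge2 (n : ℕ) : Polynomial ℚ :=
  ∑ p ∈ Finset.univ.filter (fun p : SignedPerm n => p.inD ∧ p.type0Ge2), Polynomial.X ^ p.d

namespace SignedPerm
/-- `σ̂`: the signed permutation obtained from `σ` by negating the first letter. -/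
def hat {n : ℕ} (p : SignedPerm n) : SignedPerm n :=
  (p.1, fun i => if (i : ℕ) = 0 then !(p.2 i) else p.2 i)
end SignedPerm

namespace SignedPerm
variable {n : ℕ}

lemma word_hat_ne (σ : SignedPerm n) {j : ℕ} (hj : j ≠ 1) : (hat σ).word j = σ.word j := by
  unfold word hat
  split
  · rename_i h
    have h0 : j - 1 ≠ 0 := by omega
    simp [h0]
  · rfl

lemma word_hat_one (hn : 1 ≤ n) (σ : SignedPerm n) : (hat σ).word 1 = -σ.word 1 := by
  unfold word hat
  have h : 1 ≤ 1 ∧ 1 ≤ n := ⟨le_refl 1, hn⟩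
  simp only [h, dif_pos, Nat.reduceSub]
  cases hb : σ.2 ⟨0, by omega⟩ <;> simp [hb]

lemma entry_hat_ne (σ : SignedPerm n) {j : ℕ} (hj : j ≠ 1) : (hat σ).entry j = σ.entry j := by
  unfold entry
  rcases eq_or_ne j 0 with rfl | h
  · simp [word_hat_ne σ (by norm_num : (2:ℕ) ≠ 1)]
  · simp [h, word_hat_ne σ hj]

lemma entry_hat_one (hn : 1 ≤ n) (σ : SignedPerm n) : (hat σ).entry 1 = -σ.entry 1 := by
  unfold entry
  simp [word_hat_one hn σ]

lemma mem_ddes_hat (hn : 2 ≤ n) (σ : SignedPerm n) (i : ℕ) :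
    i ∈ (hat σ).ddes ↔ (Equiv.swap 0 1 i : ℕ) ∈ σ.ddes := by
  unfold ddes
  simp only [Finset.mem_filter, Finset.mem_range]
  rcases Nat.lt_or_ge i 2 with h | h
  · interval_cases i
    · rw [Equiv.swap_apply_left]
      show 0 < n ∧ (hat σ).entry 1 < (hat σ).entry 0 ↔ 1 < n ∧ σ.entry 2 < σ.entry 1
      rw [entry_hat_one (by omega) σ, entry_hat_ne σ (by norm_num : (0:ℕ) ≠ 1)]
      simp only [entry, reduceIte]
      constructor
      · rintro ⟨-, h2⟩; exact ⟨by omega, by omega⟩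
      · rintro ⟨-, h2⟩; exact ⟨by omega, by omega⟩
    · rw [Equiv.swap_apply_right]
      show 1 < n ∧ (hat σ).entry 2 < (hat σ).entry 1 ↔ 0 < n ∧ σ.entry 1 < σ.entry 0
      rw [entry_hat_one (by omega) σ, entry_hat_ne σ (by norm_num : (2:ℕ) ≠ 1)]
      simp only [entry, reduceIte]
      constructor
      · rintro ⟨-, h2⟩; exact ⟨by omega, by omega⟩
      · rintro ⟨-, h2⟩; exact ⟨by omega, by omega⟩
  · have hs : Equiv.swap 0 1 i = i := by
      apply Equiv.swap_apply_of_ne_of_ne <;> omega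
    rw [hs, entry_hat_ne σ (by omega : i + 1 ≠ 1), entry_hat_ne σ (by omega : i ≠ 1)]

lemma ddes_hat (hn : 2 ≤ n) (σ : SignedPerm n) :
    (hat σ).ddes = σ.ddes.map (Equiv.swap 0 1).toEmbedding := by
  ext i
  rw [mem_ddes_hat hn]
  simp only [Finset.mem_map, Equiv.coe_toEmbedding]
  constructor
  · intro h
    exact ⟨Equiv.swap 0 1 i, h, Equiv.swap_apply_self _ _ _⟩
  · rintro ⟨a, ha, rfl⟩
    rwa [Equiv.swap_apply_self]

lemma d_hat (hn : 2 ≤ n) (σ : SignedPerm n) : (hat σ).d = σ.d := by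
  unfold d
  rw [ddes_hat hn, Finset.card_map]

lemma zero_mem_ddes_hat (hn : 2 ≤ n) (σ : SignedPerm n) :
    0 ∈ (hat σ).ddes ↔ 1 ∈ σ.ddes := by
  rw [mem_ddes_hat hn, Equiv.swap_apply_left]

lemma one_mem_ddes_hat (hn : 2 ≤ n) (σ : SignedPerm n) :
    1 ∈ (hat σ).ddes ↔ 0 ∈ σ.ddes := by
  rw [mem_ddes_hat hn, Equiv.swap_apply_right]

lemma not_inD_hat (hn : 1 ≤ n) (σ : SignedPerm n) (hσ : σ.inD) : ¬ (hat σ).inD := by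
  unfold inD at *
  set i0 : Fin n := ⟨0, by omega⟩ with hi0
  by_cases hb : σ.2 i0 = true
  · have hT : (Finset.univ.filter (fun i => (hat σ).2 i = true))
        = (Finset.univ.filter (fun i => σ.2 i = true)).erase i0 := by
      ext i
      simp only [Finset.mem_filter, Finset.mem_erase, Finset.mem_univ, true_and, hat]
      by_cases h : (i : ℕ) = 0
      · have : i = i0 := Fin.ext h
        subst this
        simp [hb, h]
      · have hne : i ≠ i0 := fun he => h (by rw [he])
        simp [h, hne]
    rw [hT]
    have hmem : i0 ∈ Finset.univ.filter (fun i => σ.2 i = true) := by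
      simp [hb]
    rw [Finset.card_erase_of_mem hmem]
    have hpos : 0 < (Finset.univ.filter (fun i => σ.2 i = true)).card :=
      Finset.card_pos.mpr ⟨i0, hmem⟩
    rcases hσ with ⟨m, hm⟩
    intro ⟨m', hm'⟩
    omega
  · have hT : (Finset.univ.filter (fun i => (hat σ).2 i = true))
        = insert i0 (Finset.univ.filter (fun i => σ.2 i = true)) := by
      ext i
      simp only [Finset.mem_filter, Finset.mem_insert, Finset.mem_univ, true_and, hat]
      by_cases h : (i : ℕ) = 0
      · have : i = i0 := Fin.ext h
        subst this
        simp [hb, h]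
      · have hne : i ≠ i0 := fun he => h (by rw [he])
        simp [h, hne]
    rw [hT]
    have hmem : i0 ∉ Finset.univ.filter (fun i => σ.2 i = true) := by
      simp [hb]
    rw [Finset.card_insert_of_notMem hmem]
    rcases hσ with ⟨m, hm⟩
    intro ⟨m', hm'⟩
    omega

end SignedPerm

/-- **Lemma 3.1.** For `σ ∈ D_n` (`n ≥ 2`), the element `σ̂` obtained by negating the
first letter lies in `B_n \ D_n`, has the same number of `D`-descents as `σ`, and
the leading descent types correspond as: `1 ↔ 0,≥2`, `0,1 ↔ 0,1`, `≥2 ↔ ≥2`,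
`0,≥2 ↔ 1`. -/
theorem hat_descent_types (n : ℕ) (hn : 2 ≤ n) (σ : SignedPerm n) (hσ : σ.inD) :
    ¬ (SignedPerm.hat σ).inD ∧
    (SignedPerm.hat σ).d = σ.d ∧
    (σ.type1 ↔ (SignedPerm.hat σ).type0Ge2) ∧
    (σ.type01 ↔ (SignedPerm.hat σ).type01) ∧
    (σ.typeGe2 ↔ (SignedPerm.hat σ).typeGe2) ∧
    (σ.type0Ge2 ↔ (SignedPerm.hat σ).type1) := by
  have h0 := SignedPerm.zero_mem_ddes_hat hn σ
  have h1 := SignedPerm.one_mem_ddes_hat hn σ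
  refine ⟨SignedPerm.not_inD_hat (by omega) σ hσ, SignedPerm.d_hat hn σ, ?_, ?_, ?_, ?_⟩ <;>
    simp only [SignedPerm.type1, SignedPerm.type01, SignedPerm.typeGe2, SignedPerm.type0Ge2,
      h0, h1] <;> tauto
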